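/- Intermediate extensions compose (second assertion of the lemma on properties of j_!*): given two composable gluing data — j₂ between 𝒜_{U''} and 𝒜_{U'}, and j₁ between 𝒜_{U'} and 𝒜 — the composite functors j^* := j₂^* ∘ j₁^*, j_! := j₁_! ∘ j₂_!, j_* := j₁_* ∘ j₂_* again form abelian recollement gluing data, and for every object N of 𝒜_{U''} there is a canonical isomorphism (j₁ ∘ j₂)_!* N ≅ j₁_!*( j₂_!* N ) between the intermediate extension for the composite data and the composite of the two intermediate extensions. -/

import Mathlib

/-!
Abelian recollement gluing data, abstracting the open immersion `j : U → S`: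
abelian categories `A` and `B` (the latter playing the role of `𝒜_U`), an exact
functor `jstar : A ⥤ B` with a left adjoint `jlow` (`j_!`) and a right adjoint
`jup` (`j_*`), such that the unit of `j_! ⊣ j^*` and the counit of `j^* ⊣ j_*`
are isomorphisms.  For `N : B`, `cmap N : j_! N ⟶ j_* N` is the unique morphism
whose image under `j^*` is `id_N` (under the canonical identifications), and the
intermediate extension `j_!* N` is its image.  "`X` is supported on `Z`" means
`j^* X ≅ 0`, i.e. `IsZero (jstar.obj X)`.
-/

open CategoryTheory CategoryTheory.Limits

variable {A : Type*} [Category A] [Abelian A]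
variable {B : Type*} [Category B] [Abelian B]

/-- The canonical morphism `c_N : j_! N ⟶ j_* N`, corresponding under the
adjunction `j_! ⊣ j^*` to the inverse of the counit `j^* j_* N ≅ N`. -/
noncomputable def cmap (jstar : A ⥤ B) (jlow jup : B ⥤ A)
    (adj1 : jlow ⊣ jstar) (adj2 : jstar ⊣ jup) [IsIso adj2.counit] (N : B) :
    jlow.obj N ⟶ jup.obj N :=
  (adj1.homEquiv N (jup.obj N)).symm (inv (adj2.counit.app N))

/-- The intermediate extension `j_!* N := Im (c_N : j_! N ⟶ j_* N)`. -/
noncomputable def interExt (jstar : A ⥤ B) (jlow jup : B ⥤ A)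
    (adj1 : jlow ⊣ jstar) (adj2 : jstar ⊣ jup) [IsIso adj2.counit] (N : B) : A :=
  image (cmap jstar jlow jup adj1 adj2 N)


section Helpers

omit [Abelian A] [Abelian B] in
lemma cmap_eq (jstar : A ⥤ B) (jlow jup : B ⥤ A)
    (adj1 : jlow ⊣ jstar) (adj2 : jstar ⊣ jup) [IsIso adj2.counit] (N : B) :
    cmap jstar jlow jup adj1 adj2 N
      = jlow.map (inv (adj2.counit.app N)) ≫ adj1.counit.app (jup.obj N) := by
  simp [cmap, Adjunction.homEquiv_counit]

omit [Abelian A] [Abelian B] in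
lemma cmap_natural (jstar : A ⥤ B) (jlow jup : B ⥤ A)
    (adj1 : jlow ⊣ jstar) (adj2 : jstar ⊣ jup) [IsIso adj2.counit]
    {N N' : B} (f : N ⟶ N') :
    jlow.map f ≫ cmap jstar jlow jup adj1 adj2 N'
      = cmap jstar jlow jup adj1 adj2 N ≫ jup.map f := by
  rw [cmap_eq, cmap_eq]
  have nat : jstar.map (jup.map f) ≫ adj2.counit.app N' = adj2.counit.app N ≫ f :=
    adj2.counit.naturality f
  have h1 : f ≫ inv (adj2.counit.app N') = inv (adj2.counit.app N) ≫ jstar.map (jup.map f) := by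
    rw [IsIso.comp_inv_eq, Category.assoc, nat]
    simp
  have nat2 := adj1.counit.naturality (jup.map f)
  simp only [Functor.comp_map, Functor.id_map] at nat2
  rw [← Category.assoc, ← jlow.map_comp, h1, jlow.map_comp, Category.assoc, nat2]
  simp

omit [Abelian A] [Abelian B] in
lemma cmap_comp {C : Type*} [Category C]
    (j1star : A ⥤ B) (j1low j1up : B ⥤ A)
    (adjA1 : j1low ⊣ j1star) (adjA2 : j1star ⊣ j1up) [IsIso adjA2.counit]
    (j2star : B ⥤ C) (j2low j2up : C ⥤ B)
    (adjB1 : j2low ⊣ j2star) (adjB2 : j2star ⊣ j2up) [IsIso adjB2.counit]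
    (h2 : IsIso (adjA2.comp adjB2).counit) (N : C) :
    @cmap A _ C _ (j1star ⋙ j2star) (j2low ⋙ j1low) (j2up ⋙ j1up)
        (adjB1.comp adjA1) (adjA2.comp adjB2) h2 N
      = j1low.map (cmap j2star j2low j2up adjB1 adjB2 N)
          ≫ cmap j1star j1low j1up adjA1 adjA2 (j2up.obj N) := by
  have : IsIso ((adjA2.comp adjB2).counit.app N) := inferInstance
  rw [cmap_eq, cmap_eq, cmap_eq]
  have hcu : (adjA2.comp adjB2).counit.app N
      = j2star.map (adjA2.counit.app (j2up.obj N)) ≫ adjB2.counit.app N := by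
    simp [Adjunction.comp]
  have hc1 : (adjB1.comp adjA1).counit.app ((j2up ⋙ j1up).obj N)
      = j1low.map (adjB1.counit.app (j1star.obj (j1up.obj (j2up.obj N))))
          ≫ adjA1.counit.app (j1up.obj (j2up.obj N)) := by
    simp [Adjunction.comp]
  rw [hc1]
  have hinv : inv ((adjA2.comp adjB2).counit.app N)
      = inv (adjB2.counit.app N) ≫ j2star.map (inv (adjA2.counit.app (j2up.obj N))) := by
    apply IsIso.inv_eq_of_hom_inv_id
    rw [hcu]
    simp
  rw [hinv]
  have nat := adjB1.counit.naturality (inv (adjA2.counit.app (j2up.obj N)))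
  simp only [Functor.comp_map, Functor.comp_obj, Functor.id_obj, Functor.id_map] at nat
  simp only [Functor.comp_map, Functor.map_comp, Category.assoc]
  rw [← j1low.map_comp_assoc, ← j1low.map_comp_assoc, Category.assoc, nat]
  simp

end Helpers

/-- intermediate extensions compose.  Given two composable gluing
data — `j₂` between `𝒜_{U''} = C` and `𝒜_{U'} = B`, and `j₁` between
`𝒜_{U'} = B` and `𝒜 = A` — the composite functors
`j^* = j₂^* ∘ j₁^*`, `j_! = j₁_! ∘ j₂_!`, `j_* = j₁_* ∘ j₂_*` again form
abelian recollement gluing data (the composite unit and counit are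
isomorphisms), and for every `N` there is an isomorphism
`(j₁ ∘ j₂)_!* N ≅ j₁_!*(j₂_!* N)`. -/
theorem interExt_comp
    {C : Type*} [Category C] [Abelian C]
    (j1star : A ⥤ B) (j1low j1up : B ⥤ A)
    (adjA1 : j1low ⊣ j1star) (adjA2 : j1star ⊣ j1up)
    [IsIso adjA1.unit] [IsIso adjA2.counit]
    [PreservesFiniteLimits j1star] [PreservesFiniteColimits j1star]
    (j2star : B ⥤ C) (j2low j2up : C ⥤ B)
    (adjB1 : j2low ⊣ j2star) (adjB2 : j2star ⊣ j2up)
    [IsIso adjB1.unit] [IsIso adjB2.counit]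
    [PreservesFiniteLimits j2star] [PreservesFiniteColimits j2star] :
    IsIso (adjB1.comp adjA1).unit ∧
    ∃ h2 : IsIso (adjA2.comp adjB2).counit,
      ∀ N : C, Nonempty
        ((@interExt A _ _ C _ (j1star ⋙ j2star) (j2low ⋙ j1low) (j2up ⋙ j1up)
            (adjB1.comp adjA1) (adjA2.comp adjB2) h2 N) ≅
          interExt j1star j1low j1up adjA1 adjA2
            (interExt j2star j2low j2up adjB1 adjB2 N)) := by
  have h1 : IsIso (adjB1.comp adjA1).unit := by
    haveI : ∀ X : C, IsIso ((adjB1.comp adjA1).unit.app X) := fun X => by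
      have h : (adjB1.comp adjA1).unit.app X
          = adjB1.unit.app X ≫ j2star.map (adjA1.unit.app (j2low.obj X)) := by
        simp [Adjunction.comp]
      rw [h]; infer_instance
    exact NatIso.isIso_of_isIso_app _
  have h2 : IsIso (adjA2.comp adjB2).counit := by
    haveI : ∀ X : C, IsIso ((adjA2.comp adjB2).counit.app X) := fun X => by
      have h : (adjA2.comp adjB2).counit.app X
          = j2star.map (adjA2.counit.app (j2up.obj X)) ≫ adjB2.counit.app X := by
        simp [Adjunction.comp]
      rw [h]; infer_instance
    exact NatIso.isIso_of_isIso_app _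
  refine ⟨h1, h2, fun N => ?_⟩
  haveI : j1low.PreservesEpimorphisms := Functor.preservesEpimorphisms_of_adjunction adjA1
  haveI : j1up.PreservesMonomorphisms := Functor.preservesMonomorphisms_of_adjunction adjA2
  haveI he : Epi (j1low.map (factorThruImage (cmap j2star j2low j2up adjB1 adjB2 N))
      ≫ factorThruImage (cmap j1star j1low j1up adjA1 adjA2
        (image (cmap j2star j2low j2up adjB1 adjB2 N)))) := epi_comp _ _
  haveI := strongEpi_of_epi (j1low.map (factorThruImage (cmap j2star j2low j2up adjB1 adjB2 N))
      ≫ factorThruImage (cmap j1star j1low j1up adjA1 adjA2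
        (image (cmap j2star j2low j2up adjB1 adjB2 N))))
  haveI hm : Mono (image.ι (cmap j1star j1low j1up adjA1 adjA2
        (image (cmap j2star j2low j2up adjB1 adjB2 N)))
      ≫ j1up.map (image.ι (cmap j2star j2low j2up adjB1 adjB2 N))) := mono_comp _ _
  refine ⟨(image.isoStrongEpiMono
    (j1low.map (factorThruImage (cmap j2star j2low j2up adjB1 adjB2 N))
      ≫ factorThruImage (cmap j1star j1low j1up adjA1 adjA2
        (image (cmap j2star j2low j2up adjB1 adjB2 N))))
    (image.ι (cmap j1star j1low j1up adjA1 adjA2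
        (image (cmap j2star j2low j2up adjB1 adjB2 N)))
      ≫ j1up.map (image.ι (cmap j2star j2low j2up adjB1 adjB2 N))) ?_).symm⟩
  rw [cmap_comp j1star j1low j1up adjA1 adjA2 j2star j2low j2up adjB1 adjB2 h2 N]
  simp only [Category.assoc, image.fac_assoc]
  rw [← cmap_natural j1star j1low j1up adjA1 adjA2
    (image.ι (cmap j2star j2low j2up adjB1 adjB2 N)),
    ← Functor.map_comp_assoc, image.fac]
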